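/- Let y_1 = r cos(ωα) + w_1 and y_2 = r sin(ωα) + w_2 where w_1, w_2 are independent N(0, σ²). Then in polar coordinates η = atan2(y_2, y_1), β = √(y_1² + y_2²), the marginal density of η is proportional to exp(q²)·[exp(−q²) + √π q (1 + erf(q))] where q = (r/√(2σ²)) cos(η − ωα); equivalently, p(η | α) ∝ 1 + √π q e^{q²} erfc(−q). -/

import Mathlib

open Real MeasureTheory Filter Set intervalIntegral Topology

lemma gauss_half (m σ : ℝ) (hσ : 0 < σ) :
    ∫ β in Set.Ioi (0:ℝ), Real.exp (-(β - m)^2 / (2*σ^2))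
      = σ * Real.sqrt 2 * (Real.sqrt Real.pi / 2)
        + σ * Real.sqrt 2 * ∫ u in (0:ℝ)..(m/(σ*Real.sqrt 2)), Real.exp (-u^2) := by
  set c := σ * Real.sqrt 2 with hc
  have hc0 : 0 < c := by positivity
  have hc2 : c^2 = 2*σ^2 := by
    rw [hc, mul_pow, Real.sq_sqrt (by norm_num : (2:ℝ) ≥ 0)]; ring
  have hexp : ∀ β : ℝ, Real.exp (-(β - m)^2/(2*σ^2)) = Real.exp (-((β-m)/c)^2) := by
    intro β; congr 1; rw [div_pow, hc2]; ring
  have hfc : Continuous (fun u : ℝ => Real.exp (-u^2)) := by continuity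
  have hderiv : ∀ β ∈ Set.Ici (0:ℝ),
      HasDerivAt (fun β : ℝ => c * ∫ u in (0:ℝ)..((β - m)/c), Real.exp (-u^2))
        (Real.exp (-(β - m)^2/(2*σ^2))) β := by
    intro β _
    have h1 : HasDerivAt (fun t : ℝ => ∫ u in (0:ℝ)..t, Real.exp (-u^2))
        (Real.exp (-(((β-m)/c))^2)) ((β-m)/c) :=
      intervalIntegral.integral_hasDerivAt_right (hfc.intervalIntegrable _ _)
        (hfc.stronglyMeasurable.stronglyMeasurableAtFilter) hfc.continuousAt
    have h2 : HasDerivAt (fun β : ℝ => (β - m)/c) (1/c) β := by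
      simpa using ((hasDerivAt_id β).sub_const m).div_const c
    have h3 := (h1.comp β h2).const_mul c
    have e : Real.exp (-(β - m)^2/(2*σ^2)) = c * (Real.exp (-((β - m) / c) ^ 2) * (1 / c)) := by
      rw [hexp β]
      field_simp
    rw [e]
    exact h3
  have hint : IntegrableOn (fun β : ℝ => Real.exp (-(β - m)^2/(2*σ^2))) (Set.Ioi 0) := by
    have h := (integrable_exp_neg_mul_sq (b := 1/(2*σ^2)) (by positivity)).comp_sub_right m
    apply Integrable.integrableOn
    refine h.congr ?_
    filter_upwards with x
    congr 1
    field_simp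
  have hIoi : ∫ u in Set.Ioi (0:ℝ), Real.exp (-u^2) = Real.sqrt Real.pi / 2 := by
    have := integral_gaussian_Ioi 1
    simpa using this
  have htend : Tendsto (fun β : ℝ => c * ∫ u in (0:ℝ)..((β - m)/c), Real.exp (-u^2))
      atTop (𝓝 (c * (Real.sqrt Real.pi / 2))) := by
    have hI : IntegrableOn (fun u : ℝ => Real.exp (-u^2)) (Set.Ioi 0) := by
      have := (integrable_exp_neg_mul_sq (b := (1:ℝ)) one_pos).integrableOn (s := Set.Ioi 0)
      refine this.congr ?_
      filter_upwards with x; congr 1; ring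
    have h3 : Tendsto (fun t : ℝ => ∫ u in (0:ℝ)..t, Real.exp (-u^2)) atTop
        (𝓝 (∫ u in Set.Ioi (0:ℝ), Real.exp (-u^2))) :=
      intervalIntegral_tendsto_integral_Ioi 0 hI tendsto_id
    have h4 : Tendsto (fun β : ℝ => (β - m)/c) atTop atTop := by
      apply Tendsto.atTop_div_const hc0
      simpa [sub_eq_add_neg] using tendsto_atTop_add_const_right atTop (-m) tendsto_id
    rw [hIoi] at h3
    exact (h3.comp h4).const_mul c
  have hmain := MeasureTheory.integral_Ioi_of_hasDerivAt_of_tendsto'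
    (f := fun β : ℝ => c * ∫ u in (0:ℝ)..((β - m)/c), Real.exp (-u^2)) hderiv hint htend
  rw [hmain]
  have h0 : ((0:ℝ) - m)/c = -(m/c) := by ring
  have hneg : ∫ u in (0:ℝ)..(-(m/c)), Real.exp (-u^2)
      = - ∫ u in (0:ℝ)..(m/c), Real.exp (-u^2) := by
    rw [intervalIntegral.integral_symm]
    congr 1
    have := intervalIntegral.integral_comp_neg (a := (0:ℝ)) (b := m/c)
      (fun u : ℝ => Real.exp (-u^2))
    simp only [neg_zero] at this
    rw [← this]
    congr 1; ext u; congr 1; ring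
  rw [h0, hneg]
  ring

lemma gauss_key (m σ : ℝ) (hσ : 0 < σ) :
    ∫ β in Set.Ioi (0:ℝ), β * Real.exp (-(β - m)^2 / (2*σ^2))
      = σ^2 * Real.exp (-m^2 / (2*σ^2))
        + m * (σ * Real.sqrt 2 * (Real.sqrt Real.pi / 2)
               + σ * Real.sqrt 2 * ∫ u in (0:ℝ)..(m/(σ*Real.sqrt 2)), Real.exp (-u^2)) := by
  have hint : IntegrableOn (fun β : ℝ => Real.exp (-(β - m)^2/(2*σ^2))) (Set.Ioi 0) := by
    have h := (integrable_exp_neg_mul_sq (b := 1/(2*σ^2)) (by positivity)).comp_sub_right m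
    apply Integrable.integrableOn
    refine h.congr ?_
    filter_upwards with x
    congr 1; field_simp
  have hint2 : IntegrableOn (fun β : ℝ => (β - m) * Real.exp (-(β - m)^2/(2*σ^2)))
      (Set.Ioi 0) := by
    have h := (integrable_mul_exp_neg_mul_sq (b := 1/(2*σ^2)) (by positivity)).comp_sub_right m
    apply Integrable.integrableOn
    refine h.congr ?_
    filter_upwards with x
    congr 2; field_simp
  have hsplit : (fun β : ℝ => β * Real.exp (-(β - m)^2 / (2*σ^2)))
      = fun β : ℝ => (β - m) * Real.exp (-(β - m)^2/(2*σ^2))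
        + m * Real.exp (-(β - m)^2/(2*σ^2)) := by
    funext β; ring
  rw [hsplit, integral_add hint2 (hint.const_mul m), MeasureTheory.integral_const_mul, gauss_half m σ hσ]
  have hd : ∀ β ∈ Set.Ici (0:ℝ),
      HasDerivAt (fun β : ℝ => -σ^2 * Real.exp (-(β - m)^2/(2*σ^2)))
        ((β - m) * Real.exp (-(β - m)^2/(2*σ^2))) β := by
    intro β _
    have h1 : HasDerivAt (fun β : ℝ => -(β - m)^2/(2*σ^2)) (-(2*(β-m))/(2*σ^2)) β := by
      have := (((hasDerivAt_id β).sub_const m).pow 2).neg.div_const (2*σ^2)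
      simpa using this
    have h2 := (h1.exp).const_mul (-σ^2)
    have e : (β - m) * Real.exp (-(β - m)^2/(2*σ^2))
        = -σ^2 * (Real.exp (-(β - m)^2/(2*σ^2)) * (-(2*(β-m))/(2*σ^2))) := by
      field_simp
    rw [e]
    exact h2
  have hsub : Tendsto (fun β : ℝ => β - m) atTop atTop := by
    simpa [sub_eq_add_neg] using tendsto_atTop_add_const_right atTop (-m) tendsto_id
  have hbot : Tendsto (fun β : ℝ => -(β - m)^2/(2*σ^2)) atTop atBot := by
    have hsq : Tendsto (fun β : ℝ => (β - m)^2) atTop atTop := by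
      have := hsub.atTop_mul_atTop₀ hsub
      refine this.congr fun β => by ring
    have hdiv : Tendsto (fun β : ℝ => (β - m)^2/(2*σ^2)) atTop atTop :=
      hsq.atTop_div_const (by positivity)
    have := tendsto_neg_atTop_atBot.comp hdiv
    refine (Tendsto.congr fun β => by simp [Function.comp]; ring) this
  have htend0 : Tendsto (fun β : ℝ => -σ^2 * Real.exp (-(β - m)^2/(2*σ^2))) atTop (𝓝 0) := by
    have := (Real.tendsto_exp_atBot.comp hbot).const_mul (-σ^2)
    simpa using this
  have h1st := MeasureTheory.integral_Ioi_of_hasDerivAt_of_tendsto' hd hint2 htend0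
  rw [h1st]
  have : ((0:ℝ) - m)^2 = m^2 := by ring
  simp only [this]
  ring

theorem stmt14 (r ω α σ : ℝ) (hr : 0 < r) (hσ : 0 < σ) (erf : ℝ → ℝ)
    (herf : ∀ t : ℝ, erf t = 2 / Real.sqrt Real.pi * ∫ u in (0 : ℝ)..t, Real.exp (-u ^ 2)) :
    ∃ c : ℝ, 0 < c ∧ ∀ η : ℝ,
      (∫ β in Set.Ioi (0 : ℝ), β * (1 / (2 * Real.pi * σ ^ 2) *
        Real.exp (-((β * Real.cos η - r * Real.cos (ω * α)) ^ 2 +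
            (β * Real.sin η - r * Real.sin (ω * α)) ^ 2) / (2 * σ ^ 2)))) =
      c * (1 + Real.sqrt Real.pi * (r / Real.sqrt (2 * σ ^ 2) * Real.cos (η - ω * α)) *
        Real.exp ((r / Real.sqrt (2 * σ ^ 2) * Real.cos (η - ω * α)) ^ 2) *
        (1 + erf (r / Real.sqrt (2 * σ ^ 2) * Real.cos (η - ω * α)))) := by
  have hπ : 0 < Real.pi := Real.pi_pos
  have hsπ : (0:ℝ) < Real.sqrt Real.pi := Real.sqrt_pos.mpr hπ
  have h2 : Real.sqrt 2 ^ 2 = 2 := Real.sq_sqrt (by norm_num)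
  refine ⟨Real.exp (-r^2/(2*σ^2)) / (2*Real.pi), by positivity, fun η => ?_⟩
  set a := ω * α with ha
  set m := r * Real.cos (η - a) with hm
  have hsq2 : Real.sqrt (2*σ^2) = σ * Real.sqrt 2 := by
    rw [Real.sqrt_mul (by norm_num) (σ^2), Real.sqrt_sq hσ.le]; ring
  set q := m / (σ * Real.sqrt 2) with hqdef
  have hq : r / Real.sqrt (2*σ^2) * Real.cos (η - a) = q := by
    rw [hsq2, hqdef, hm]; ring
  rw [hq, herf q]
  have hmq : m = σ * Real.sqrt 2 * q := by
    rw [hqdef]; field_simp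
  have hm2 : m^2 = q^2 * (2*σ^2) := by
    rw [hmq, mul_pow, mul_pow, h2]; ring
  have hK : ∀ β : ℝ, β * (1 / (2 * Real.pi * σ ^ 2) *
        Real.exp (-((β * Real.cos η - r * Real.cos a) ^ 2 +
            (β * Real.sin η - r * Real.sin a) ^ 2) / (2 * σ ^ 2)))
      = (Real.exp (q^2) * Real.exp (-r^2/(2*σ^2)) / (2*Real.pi*σ^2))
          * (β * Real.exp (-(β - m)^2/(2*σ^2))) := by
    intro β
    have hcos : Real.cos (η - a) = Real.cos η * Real.cos a + Real.sin η * Real.sin a :=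
      Real.cos_sub η a
    have hpy1 : Real.sin η ^2 + Real.cos η^2 = 1 := Real.sin_sq_add_cos_sq η
    have hpy2 : Real.sin a ^2 + Real.cos a^2 = 1 := Real.sin_sq_add_cos_sq a
    have hnum : (β * Real.cos η - r * Real.cos a)^2 + (β * Real.sin η - r * Real.sin a)^2
        = (β - m)^2 + (r^2 - m^2) := by
      rw [hm, hcos]; linear_combination β^2*hpy1 + r^2*hpy2
    have hE : -((β * Real.cos η - r * Real.cos a) ^ 2 +
            (β * Real.sin η - r * Real.sin a) ^ 2) / (2 * σ ^ 2)
        = q^2 + (-r^2/(2*σ^2)) + (-(β - m)^2/(2*σ^2)) := by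
      rw [hnum]
      field_simp
      linear_combination hm2
    rw [hE, Real.exp_add, Real.exp_add]; ring
  have hI : (∫ β in Set.Ioi (0:ℝ), β * (1 / (2 * Real.pi * σ ^ 2) *
        Real.exp (-((β * Real.cos η - r * Real.cos a) ^ 2 +
            (β * Real.sin η - r * Real.sin a) ^ 2) / (2 * σ ^ 2))))
      = (Real.exp (q^2) * Real.exp (-r^2/(2*σ^2)) / (2*Real.pi*σ^2))
          * ∫ β in Set.Ioi (0:ℝ), β * Real.exp (-(β - m)^2/(2*σ^2)) := by
    rw [← MeasureTheory.integral_const_mul]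
    exact MeasureTheory.setIntegral_congr_fun measurableSet_Ioi fun β _ => hK β
  rw [hI, gauss_key m σ hσ, ← hqdef]
  set G := ∫ u in (0:ℝ)..q, Real.exp (-u^2) with hG
  have hcc : m * (σ * Real.sqrt 2 * (Real.sqrt Real.pi / 2) + σ * Real.sqrt 2 * G)
      = 2*σ^2*q*(Real.sqrt Real.pi/2 + G) := by
    rw [hmq]
    linear_combination (σ^2*q*(Real.sqrt Real.pi/2 + G)) * h2
  have hEm : Real.exp (-m^2/(2*σ^2)) = (Real.exp (q^2))⁻¹ := by
    rw [← Real.exp_neg]; congr 1; rw [hm2]; field_simp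
  rw [hcc, hEm]
  have hex : Real.exp (q^2) ≠ 0 := Real.exp_ne_zero _
  field_simp
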